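/- Let n ≥ 2 be an integer. For every real θ there exists j ∈ {0,1,…,n−1} with cos(θ − 2πj/n) ≥ cos(π/n); consequently, every (u,θ) in Ω_n satisfies u > cos(π/n). Moreover, every (u,θ) ∈ Ω_n satisfies T_n(u) > cos(nθ). -/

import Mathlib

open Real Finset Filter

noncomputable def cT (k : ℤ) (x : ℝ) : ℝ := (Polynomial.Chebyshev.T ℝ k).eval x

noncomputable def cU (k : ℤ) (x : ℝ) : ℝ := (Polynomial.Chebyshev.U ℝ k).eval x

noncomputable def x0 (n : ℕ) (u θ : ℝ) : ℝ :=
  Real.sin (n * θ) / (n * (cT n u - Real.cos (n * θ)))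

noncomputable def x1 (n : ℕ) (u θ : ℝ) : ℝ :=
  -(cT ((n : ℤ) - 1) u * Real.sin θ + u * Real.sin (((n : ℝ) - 1) * θ)) /
      (n * (cT n u - Real.cos (n * θ))) +
    ((n : ℝ) - 1) / (n : ℝ) ^ 2 *
      ∑ j ∈ Finset.Icc 1 (n - 1),
        Real.log (u - Real.cos (θ - 2 * π * j / n)) * Real.sin (2 * π * j / n)

noncomputable def x2 (n : ℕ) (u θ : ℝ) : ℝ :=
  (-(cT ((n : ℤ) - 1) u) * Real.cos θ + u * Real.cos (((n : ℝ) - 1) * θ)) /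
      (n * (cT n u - Real.cos (n * θ))) +
    ((n : ℝ) - 1) / (n : ℝ) ^ 2 *
      ∑ j ∈ Finset.range n,
        Real.log (u - Real.cos (θ - 2 * π * j / n)) * Real.cos (2 * π * j / n)

def Omega (n : ℕ) : Set (ℝ × ℝ) :=
  {p | ∀ j < n, Real.cos (p.2 - 2 * π * j / n) < p.1}

lemma cT_rec (k : ℤ) (x : ℝ) : cT (k+2) x = 2*x*cT (k+1) x - cT k x := by
  simp [cT, Polynomial.Chebyshev.T_add_two]

lemma cT_chain (x : ℝ) (hx : 1 ≤ x) : ∀ k : ℕ, 1 ≤ cT k x ∧ cT k x ≤ cT (k+1) x := by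
  intro k
  induction k with
  | zero => simp [cT, hx]
  | succ m ih =>
    have h2 := cT_rec m x
    have e1 : ((m+1:ℕ):ℤ) = (m:ℤ)+1 := by push_cast; ring
    constructor
    · rw [e1]; exact ih.1.trans ih.2
    · rw [e1, show (m:ℤ)+1+1 = (m:ℤ)+2 by ring, h2]
      nlinarith [ih.1, ih.2]

lemma cT_ge_x (x : ℝ) (hx : 1 ≤ x) : ∀ k : ℕ, x ≤ cT (k+1) x := by
  intro k
  induction k with
  | zero => simp [cT]
  | succ m ih =>
    have h := (cT_chain x hx (m+1)).2
    have e1 : ((m+1:ℕ):ℤ) = (m:ℤ)+1 := by push_cast; ring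
    rw [e1] at h
    rw [e1]
    exact ih.trans h

-- key lemma
lemma key (n : ℕ) (hn : 2 ≤ n) (θ : ℝ) :
    ∃ j < n, ∃ q : ℤ, |θ - 2*π*j/n - q*(2*π)| ≤ π/n := by
  have hnp : (0:ℝ) < n := by positivity
  set k : ℤ := round (n*θ/(2*π)) with hk
  have h1 : |n*θ/(2*π) - k| ≤ 1/2 := abs_sub_round _
  refine ⟨(k % n).toNat, ?_, k / n, ?_⟩
  · have h0 : (0:ℤ) < n := by exact_mod_cast hnp
    have := Int.emod_lt_of_pos k h0
    omega
  · have h0 : (0:ℤ) < n := by exact_mod_cast hnp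
    have hjq : ((k % n).toNat : ℤ) + n * (k / n) = k := by
      have := Int.emod_nonneg k (by omega : (n:ℤ) ≠ 0)
      have := Int.emod_add_mul_ediv k n
      omega
    have hjr : ((((k % n).toNat : ℕ)) : ℝ) + n * ((k / n : ℤ) : ℝ) = (k : ℝ) := by
      exact_mod_cast congrArg (Int.cast : ℤ → ℝ) hjq
    have hpi : (0:ℝ) < π := pi_pos
    have heq : θ - 2*π*((k % n).toNat : ℕ)/n - (k / n : ℤ)*(2*π)
        = (2*π/n) * (n*θ/(2*π) - k) := by
      field_simp
      linear_combination (-(2:ℝ)*π) * hjr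
    rw [heq, abs_mul, abs_of_pos (by positivity : (0:ℝ) < 2*π/n)]
    calc 2*π/n * |n*θ/(2*π) - k| ≤ 2*π/n * (1/2) := by
          apply mul_le_mul_of_nonneg_left h1 (by positivity)
      _ = π/n := by ring

theorem stmt9 (n : ℕ) (hn : 2 ≤ n) :
    (∀ θ : ℝ, ∃ j < n, Real.cos (θ - 2 * π * j / n) ≥ Real.cos (π / n)) ∧
    (∀ p ∈ Omega n, Real.cos (π / n) < p.1) ∧
    (∀ p ∈ Omega n, Real.cos (n * p.2) < cT n p.1) := by
  have hnp : (0:ℝ) < n := by positivity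
  have hpi : (0:ℝ) < π := pi_pos
  have hn2 : (2:ℝ) ≤ n := by exact_mod_cast hn
  have hpin : π/n ≤ π := by
    rw [div_le_iff₀ hnp]; nlinarith
  have part1 : ∀ θ : ℝ, ∃ j < n, Real.cos (θ - 2 * π * j / n) ≥ Real.cos (π / n) := by
    intro θ
    obtain ⟨j, hj, q, hq⟩ := key n hn θ
    refine ⟨j, hj, ?_⟩
    set β := θ - 2*π*j/n - q*(2*π) with hβ
    have : θ - 2*π*j/n = β + q*(2*π) := by ring
    rw [this, Real.cos_add_int_mul_two_pi, ← Real.cos_abs]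
    exact Real.cos_le_cos_of_nonneg_of_le_pi (abs_nonneg β) hpin hq
  refine ⟨part1, ?_, ?_⟩
  · intro p hp
    obtain ⟨j, hj, hc⟩ := part1 p.2
    exact lt_of_le_of_lt hc (hp j hj)
  · intro p hp
    obtain ⟨u, θ⟩ := p
    simp only at *
    by_cases hu : u < 1
    · -- u < 1 case
      have hul : Real.cos (π/n) < u := by
        obtain ⟨j, hj, hc⟩ := part1 θ
        exact lt_of_le_of_lt hc (hp j hj)
      have hum1 : (-1:ℝ) ≤ u := le_of_lt (lt_of_le_of_lt (neg_one_le_cos _) hul)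
      set α := Real.arccos u with hα
      have hca : Real.cos α = u := Real.cos_arccos hum1 hu.le
      have hα0 : 0 < α := Real.arccos_pos.2 hu
      have hαlt : α < π/n := by
        by_contra h
        push_neg at h
        have := Real.cos_le_cos_of_nonneg_of_le_pi (by positivity) (Real.arccos_le_pi u) h
        rw [hca] at this; linarith
      obtain ⟨j, hj, q, hq⟩ := key n hn θ
      set β := θ - 2*π*j/n - q*(2*π) with hβ
      have hcβ : Real.cos β < u := by
        have : θ - 2*π*j/n = β + q*(2*π) := by ring
        have h2 := hp j hj
        rw [this, Real.cos_add_int_mul_two_pi] at h2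
        exact h2
      have hαβ : α < |β| := by
        by_contra h
        push_neg at h
        have := Real.cos_le_cos_of_nonneg_of_le_pi (abs_nonneg β)
          (le_trans hαlt.le hpin) h
        rw [hca, Real.cos_abs] at this; linarith
      -- cos (n θ) = cos (n β)
      have hcos : Real.cos (n*θ) = Real.cos ((n:ℝ)*|β|) := by
        have hthis : (n:ℝ)*θ = (n:ℝ)*β + (((j:ℤ) + (n:ℤ)*q : ℤ) : ℝ) * (2*π) := by
          rw [hβ]
          push_cast
          field_simp
          ring
        rw [hthis, Real.cos_add_int_mul_two_pi, ← Real.cos_abs, abs_mul,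
          abs_of_pos hnp]
      have hT : cT n u = Real.cos ((n:ℝ)*α) := by
        rw [← hca, cT, Polynomial.Chebyshev.T_real_cos]
        norm_num
      rw [hcos, hT]
      apply Real.cos_lt_cos_of_nonneg_of_le_pi (by positivity)
      · calc (n:ℝ)*|β| ≤ (n:ℝ)*(π/n) := by
              apply mul_le_mul_of_nonneg_left hq hnp.le
          _ = π := by field_simp
      · exact (mul_lt_mul_iff_right₀ hnp).2 hαβ
    · -- u ≥ 1 case
      push_neg at hu
      have hT1 : 1 ≤ cT n u := (cT_chain u hu n).1
      rcases lt_or_eq_of_le (Real.cos_le_one (n*θ)) with h | h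
      · exact lt_of_lt_of_le h hT1
      · -- cos(nθ) = 1
        obtain ⟨m, hm⟩ := (Real.cos_eq_one_iff _).1 h
        -- θ = 2πm/n
        have hθ : θ = (m:ℝ)*(2*π)/n := by
          field_simp at hm ⊢
          linarith
        set j : ℕ := (m % n).toNat with hjd
        have h0 : (0:ℤ) < n := by exact_mod_cast hnp
        have hjn : j < n := by
          have := Int.emod_lt_of_pos m h0
          have := Int.emod_nonneg m (by omega : (n:ℤ) ≠ 0)
          omega
        have hdvd : ((m - j : ℤ)) = n * (m / n) := by
          have := Int.emod_add_mul_ediv m n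
          have := Int.emod_nonneg m (by omega : (n:ℤ) ≠ 0)
          omega
        have hcj : Real.cos (θ - 2*π*j/n) = 1 := by
          have h5 : θ - 2*π*j/n = 0 + (((m / n : ℤ) : ℤ)) * (2*π) := by
            rw [hθ]
            have : ((m:ℝ) - (j:ℝ)) = (n:ℝ) * ((m / n : ℤ) : ℝ) := by
              exact_mod_cast congrArg (Int.cast : ℤ → ℝ) hdvd
            field_simp
            nlinarith [this]
          rw [h5, Real.cos_add_int_mul_two_pi, Real.cos_zero]
        have hu1 : 1 < u := by
          have := hp j hjn
          rw [hcj] at this; exact this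
        have : u ≤ cT n u := by
          have := cT_ge_x u hu (n-1)
          have hn1 : ((n-1:ℕ):ℤ) + 1 = (n:ℤ) := by omega
          rwa [hn1] at this
        rw [h]
        linarith
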